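/- Fix α ∈ (2/3, 1). Then ∑_{m=1}^∞ m · p_m = α − √(α·(3α−2)). -/

import Mathlib

open Finset

/-- The peeling probability `p_m` for a hyperbolic half-planar triangulation with
parameter `α`:  `p_m = (2/4^m) ((2m-2)!/((m-1)!(m+1)!)) (2/α - 2)^m ((3α-2)m + 1)`. -/
noncomputable def peelP (α : ℝ) (m : ℕ) : ℝ :=
  (2 / 4 ^ m) *
    ((Nat.factorial (2 * m - 2) : ℝ) /
      ((Nat.factorial (m - 1) : ℝ) * (Nat.factorial (m + 1) : ℝ))) *
    (2 / α - 2) ^ m * ((3 * α - 2) * m + 1)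

/-- The critical site-percolation probability `p_c = (1/2)(1 - √(3 - 2/α))`. -/
noncomputable def pcrit (α : ℝ) : ℝ := (1 / 2) * (1 - Real.sqrt (3 - 2 / α))

/-- The normalising constant `c_α = 2/(1 - √(α(3α-2)))`. -/
noncomputable def cAlpha (α : ℝ) : ℝ := 2 / (1 - Real.sqrt (α * (3 * α - 2)))

/-- The increment law `μ` of the peeling random walk: `μ(1) = c_α α p_c`,
`μ(-m) = (1/2) c_α p_m` for `m ≥ 1`, and `μ(i) = 0` otherwise. -/
noncomputable def incLaw (α : ℝ) : ℤ → ℝ := fun i =>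
  if i = 1 then cAlpha α * α * pcrit α
  else if i ≤ -1 then (1 / 2) * cAlpha α * peelP α (-i).toNat
  else 0

namespace PeelAux

noncomputable def a (n : ℕ) : ℝ := (Nat.centralBinom n : ℝ)

lemma a_pos (n : ℕ) : 0 < a n := by
  unfold a; exact_mod_cast Nat.centralBinom_pos n

lemma a_zero : a 0 = 1 := by simp [a, Nat.centralBinom]

lemma a_rec (n : ℕ) : ((n : ℝ) + 1) * a (n + 1) = (4 * n + 2) * a n := by
  have h := congrArg (Nat.cast (R := ℝ)) (Nat.succ_mul_centralBinom_succ n)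
  push_cast at h
  unfold a
  linarith

lemma a_le (n : ℕ) : a n ≤ 4 ^ n := by
  induction n with
  | zero => simp [a_zero]
  | succ n ih =>
    have h := a_rec n
    have h1 : (0:ℝ) < (n:ℝ) + 1 := by positivity
    have h2 : a (n + 1) ≤ 4 * a n := by nlinarith [a_pos n]
    calc a (n+1) ≤ 4 * a n := h2
      _ ≤ 4 * 4 ^ n := by nlinarith [a_pos n]
      _ = 4 ^ (n+1) := by ring

lemma half (N : ℕ) :
    2 * ∑ k ∈ range (N + 1), (k : ℝ) * (a k * a (N - k)) =
      (N : ℝ) * ∑ k ∈ range (N + 1), a k * a (N - k) := by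
  have h1 : ∑ k ∈ range (N + 1), ((N - k : ℕ) : ℝ) * (a (N - k) * a (N - (N - k)))
      = ∑ k ∈ range (N + 1), (k : ℝ) * (a k * a (N - k)) := by
    simpa using Finset.sum_range_reflect (fun k => (k : ℝ) * (a k * a (N - k))) (N + 1)
  have h2 : ∀ k ∈ range (N + 1), (N : ℝ) * (a k * a (N - k))
      = (k : ℝ) * (a k * a (N - k)) + ((N - k : ℕ) : ℝ) * (a (N - k) * a (N - (N - k))) := by
    intro k hk
    have hkN : k ≤ N := Nat.lt_succ_iff.mp (mem_range.mp hk)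
    rw [Nat.sub_sub_self hkN, Nat.cast_sub hkN]
    ring
  calc 2 * ∑ k ∈ range (N + 1), (k : ℝ) * (a k * a (N - k))
      = ∑ k ∈ range (N + 1), (k : ℝ) * (a k * a (N - k))
        + ∑ k ∈ range (N + 1), ((N - k : ℕ) : ℝ) * (a (N - k) * a (N - (N - k))) := by
        rw [h1]; ring
    _ = ∑ k ∈ range (N + 1), (N : ℝ) * (a k * a (N - k)) := by
        rw [← Finset.sum_add_distrib]; exact (Finset.sum_congr rfl h2).symm
    _ = (N : ℝ) * ∑ k ∈ range (N + 1), a k * a (N - k) := by rw [Finset.mul_sum]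

lemma conv (n : ℕ) : ∑ k ∈ range (n + 1), a k * a (n - k) = 4 ^ n := by
  induction n with
  | zero => simp [a_zero]
  | succ n ih =>
    have hn1 : ((n : ℝ) + 1) ≠ 0 := by positivity
    apply mul_left_cancel₀ hn1
    have h0 := half (n + 1)
    push_cast at h0
    rw [← h0]
    have hshift : ∑ k ∈ range (n + 2), (k : ℝ) * (a k * a (n + 1 - k))
        = ∑ k ∈ range (n + 1), ((k : ℝ) + 1) * (a (k + 1) * a (n - k)) := by
      rw [Finset.sum_range_succ' (fun k => (k : ℝ) * (a k * a (n + 1 - k))) (n + 1)]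
      simp
    rw [hshift]
    have hrec : ∀ k ∈ range (n + 1), ((k : ℝ) + 1) * (a (k + 1) * a (n - k))
        = 4 * ((k : ℝ) * (a k * a (n - k))) + 2 * (a k * a (n - k)) := by
      intro k _
      have := a_rec k
      nlinarith [this, a_pos (n - k)]
    rw [Finset.sum_congr rfl hrec, Finset.sum_add_distrib, ← Finset.mul_sum, ← Finset.mul_sum]
    have h3 := half n
    rw [ih] at h3 ⊢
    -- goal : 2 * (4 * ∑ k, k*(a k * a (n-k)) + 2 * 4^n) = (n+1) * 4^(n+1)
    linear_combination 4 * h3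

lemma hasSum_a {t : ℝ} (ht0 : 0 ≤ t) (ht : t < 1 / 4) :
    HasSum (fun n => a n * t ^ n) (1 / Real.sqrt (1 - 4 * t)) := by
  have hu : (0:ℝ) < 1 - 4 * t := by linarith
  have hupos : 0 < Real.sqrt (1 - 4 * t) := Real.sqrt_pos.mpr hu
  have hbound : ∀ n, ‖a n * t ^ n‖ ≤ (4 * t) ^ n := by
    intro n
    rw [Real.norm_eq_abs, abs_of_nonneg (mul_nonneg (a_pos n).le (pow_nonneg ht0 n)), mul_pow]
    exact mul_le_mul_of_nonneg_right (a_le n) (pow_nonneg ht0 n)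
  have h4t : |4 * t| < 1 := by rw [abs_of_nonneg (by linarith)]; linarith
  have hsum4t : HasSum (fun n : ℕ => (4 * t) ^ n) (1 / (1 - 4 * t)) := by
    simpa [one_div] using hasSum_geometric_of_abs_lt_one h4t
  have hnorm : Summable (fun n => ‖a n * t ^ n‖) :=
    Summable.of_nonneg_of_le (fun n => norm_nonneg _) hbound hsum4t.summable
  have hS : Summable (fun n => a n * t ^ n) := hnorm.of_norm
  have hFhas : HasSum (fun n => a n * t ^ n) (∑' n, a n * t ^ n) := hS.hasSum
  set F := ∑' n, a n * t ^ n with hFdef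
  have hmul := hasSum_sum_range_mul_of_summable_norm hnorm hnorm
  have hinner : ∀ n : ℕ, ∑ k ∈ range (n + 1), (a k * t ^ k) * (a (n - k) * t ^ (n - k))
      = (4 * t) ^ n := by
    intro n
    have he : ∀ k ∈ range (n + 1), (a k * t ^ k) * (a (n - k) * t ^ (n - k))
        = (a k * a (n - k)) * t ^ n := by
      intro k hk
      have hkn : k ≤ n := Nat.lt_succ_iff.mp (mem_range.mp hk)
      rw [show t ^ n = t ^ k * t ^ (n - k) by rw [← pow_add, Nat.add_sub_cancel' hkn]]
      ring
    rw [Finset.sum_congr rfl he, ← Finset.sum_mul, conv n, mul_pow]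
  rw [funext hinner] at hmul
  have hFF : F * F = 1 / (1 - 4 * t) := hmul.unique hsum4t
  have hF1 : 1 ≤ F := by
    have := le_hasSum hFhas 0 (fun b _ => mul_nonneg (a_pos b).le (pow_nonneg ht0 b))
    simpa [a_zero] using this
  have hFeq : F = 1 / Real.sqrt (1 - 4 * t) := by
    have h1 : Real.sqrt (F ^ 2) = F := Real.sqrt_sq (by linarith)
    rw [sq, hFF, one_div, Real.sqrt_inv, ← one_div] at h1
    exact h1.symm
  rw [← hFeq]
  exact hFhas

lemma pointwise {α t : ℝ} (hα : α ≠ 0) (h4 : 2 / α - 2 = 4 * t) (n : ℕ) :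
    ((n + 1 : ℕ) : ℝ) * peelP α (n + 1) =
      (3 * α - 2) / 2 * (a (n + 1) * t ^ (n + 1))
      + (1 - (3 * α - 2)) / 3 * (a (n + 1) / ((n : ℝ) + 2) * t ^ (n + 1))
      + (2 + (3 * α - 2)) / 6 * (a (n + 1) / (2 * (n : ℝ) + 1) * t ^ (n + 1)) := by
  have e1 : 2 * (n + 1) - 2 = 2 * n := by omega
  have e2 : n + 1 - 1 = n := by omega
  unfold peelP
  rw [e1, e2, h4]
  have ea : a (n + 1) = (Nat.factorial (2 * n + 2) : ℝ) /
      ((Nat.factorial (n + 1) : ℝ) * (Nat.factorial (n + 1) : ℝ)) := by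
    unfold a
    rw [Nat.centralBinom, show 2 * (n + 1) = 2 * n + 2 from by omega,
      Nat.cast_choose ℝ (by omega : n + 1 ≤ 2 * n + 2),
      show 2 * n + 2 - (n + 1) = n + 1 from by omega]
  have f1 : (Nat.factorial (2 * n + 2) : ℝ)
      = (2 * (n : ℝ) + 2) * (2 * (n : ℝ) + 1) * (Nat.factorial (2 * n) : ℝ) := by
    rw [show 2 * n + 2 = (2 * n + 1) + 1 from by omega, Nat.factorial_succ, Nat.factorial_succ]
    push_cast; ring
  have f2 : (Nat.factorial (n + 1 + 1) : ℝ) = ((n : ℝ) + 2) * ((n : ℝ) + 1) * (Nat.factorial n : ℝ) := by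
    rw [Nat.factorial_succ, Nat.factorial_succ]; push_cast; ring
  have f3 : (Nat.factorial (n + 1) : ℝ) = ((n : ℝ) + 1) * (Nat.factorial n : ℝ) := by
    rw [Nat.factorial_succ]; push_cast; ring
  have hfn : (Nat.factorial n : ℝ) ≠ 0 := by
    exact_mod_cast (Nat.factorial_pos n).ne'
  have h4n : ((4 : ℝ) ^ (n + 1)) ≠ 0 := by positivity
  have hn1 : ((n : ℝ) + 1) ≠ 0 := by positivity
  have hn2 : ((n : ℝ) + 2) ≠ 0 := by positivity
  have h2n1 : (2 * (n : ℝ) + 1) ≠ 0 := by positivity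
  rw [ea, f1, f2, f3, mul_pow]
  push_cast
  field_simp
  ring

end PeelAux

open PeelAux in
/-- `∑_{m=1}^∞ m p_m = α - √(α(3α-2))`. -/
theorem peelP_mean (α : ℝ) (hα : α ∈ Set.Ioo (2 / 3 : ℝ) 1) :
    HasSum (fun m : ℕ => ((m + 1 : ℕ) : ℝ) * peelP α (m + 1))
      (α - Real.sqrt (α * (3 * α - 2))) := by
  obtain ⟨hα1, hα2⟩ := hα
  have hα0 : (0:ℝ) < α := by linarith
  set t : ℝ := (1 - α) / (2 * α) with ht_def
  have ht0 : 0 < t := div_pos (by linarith) (by linarith)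
  have ht4 : t < 1 / 4 := by
    rw [ht_def, div_lt_div_iff₀ (by linarith) (by norm_num)]
    linarith
  have h4 : 2 / α - 2 = 4 * t := by
    rw [ht_def]; field_simp; ring
  have h1m4t : 1 - 4 * t = (3 * α - 2) / α := by
    rw [ht_def]; field_simp; ring
  have hupos : 0 < Real.sqrt (1 - 4 * t) := Real.sqrt_pos.mpr (by linarith)
  set u : ℝ := Real.sqrt (1 - 4 * t) with hu_def
  have hu2 : u ^ 2 = 1 - 4 * t := Real.sq_sqrt (by linarith)
  have hune : u ≠ 0 := hupos.ne'
  have hαu : α * u ^ 2 = 3 * α - 2 := by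
    rw [hu2, h1m4t]; field_simp
  have hF0 : HasSum (fun n => a n * t ^ n) (1 / u) := hasSum_a ht0.le ht4
  clear_value u t
  have hF : HasSum (fun n => a n * t ^ n) (1 / u) := hF0
  -- shifted central binomial series
  have hA : HasSum (fun n : ℕ => a (n + 1) * t ^ (n + 1)) (1 / u - 1) := by
    apply (hasSum_nat_add_iff (f := fun n => a n * t ^ n) 1).mpr
    have e : 1 / u - 1 + ∑ i ∈ range 1, a i * t ^ i = 1 / u := by simp [a_zero]
    rw [e]; exact hF
  -- the 1/(2n+1) series
  have heqH : ∀ n : ℕ, a (n + 1) / (2 * (n : ℝ) + 1) * t ^ (n + 1)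
      = 4 * t * (a n * t ^ n) - a (n + 1) * t ^ (n + 1) := by
    intro n
    have hrec := a_rec n
    have hn1 : ((n : ℝ) + 1) ≠ 0 := by positivity
    have h2n1 : (2 * (n : ℝ) + 1) ≠ 0 := by positivity
    rw [pow_succ]
    field_simp
    linear_combination 2 * hrec
  have hH : HasSum (fun n : ℕ => a (n + 1) / (2 * (n : ℝ) + 1) * t ^ (n + 1)) (1 - u) := by
    have h1 := (hF.mul_left (4 * t)).sub hA
    have hval : 4 * t * (1 / u) - (1 / u - 1) = 1 - u := by
      field_simp
      linear_combination hu2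
    rw [hval] at h1
    rw [funext heqH]
    exact h1
  -- the Catalan series
  have heqC : ∀ n : ℕ, a (n + 1) / (2 * (n : ℝ) + 1) * t ^ (n + 1)
      = 2 * t * (a n / ((n : ℝ) + 1) * t ^ n) := by
    intro n
    have hrec := a_rec n
    have hn1 : ((n : ℝ) + 1) ≠ 0 := by positivity
    have h2n1 : (2 * (n : ℝ) + 1) ≠ 0 := by positivity
    rw [pow_succ]
    field_simp
    linear_combination hrec
  have hCat : HasSum (fun n : ℕ => a n / ((n : ℝ) + 1) * t ^ n) ((1 - u) / (2 * t)) := by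
    have h2t : (2 * t) ≠ 0 := by positivity
    have h1 : HasSum (fun n : ℕ => 2 * t * (a n / ((n : ℝ) + 1) * t ^ n))
        (2 * t * ((1 - u) / (2 * t))) := by
      rw [funext heqC] at hH
      have : 2 * t * ((1 - u) / (2 * t)) = 1 - u := by field_simp
      rw [this]; exact hH
    exact (hasSum_mul_left_iff h2t).mp h1
  have hG : HasSum (fun n : ℕ => a (n + 1) / (((n + 1 : ℕ) : ℝ) + 1) * t ^ (n + 1))
      ((1 - u) / (2 * t) - 1) := by
    apply (hasSum_nat_add_iff (f := fun n => a n / ((n : ℝ) + 1) * t ^ n) 1).mpr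
    have e : (1 - u) / (2 * t) - 1 + ∑ i ∈ range 1, a i / ((i : ℝ) + 1) * t ^ i
        = (1 - u) / (2 * t) := by simp [a_zero]
    rw [e]; exact hCat
  -- assemble
  have hsum := ((hA.mul_left ((3 * α - 2) / 2)).add
      (hG.mul_left ((1 - (3 * α - 2)) / 3))).add (hH.mul_left ((2 + (3 * α - 2)) / 6))
  have hfun : (fun m : ℕ => ((m + 1 : ℕ) : ℝ) * peelP α (m + 1))
      = fun n : ℕ => ((3 * α - 2) / 2 * (a (n + 1) * t ^ (n + 1))
          + (1 - (3 * α - 2)) / 3 * (a (n + 1) / (((n + 1 : ℕ) : ℝ) + 1) * t ^ (n + 1)))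
          + (2 + (3 * α - 2)) / 6 * (a (n + 1) / (2 * (n : ℝ) + 1) * t ^ (n + 1)) := by
    funext n
    rw [pointwise hα0.ne' h4 n]
    push_cast
    ring
  rw [hfun]
  convert hsum using 1
  · rfl
  -- value identity
  have hsq : Real.sqrt (α * (3 * α - 2)) = α * u := by
    rw [show α * (3 * α - 2) = (α * u) ^ 2 by
      rw [mul_pow, hu2, h1m4t]; field_simp]
    exact Real.sqrt_sq (by positivity)
  have hαne : α ≠ 0 := hα0.ne'
  have hu1' : (1 : ℝ) + u ≠ 0 := by positivity
  have hult : u < 1 := by nlinarith [hu2]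
  have hdiv : (1 - u) / (2 * t) = 2 / (1 + u) := by
    rw [show t = (1 - u ^ 2) / 4 by linarith,
      div_eq_div_iff (by nlinarith : (2 : ℝ) * ((1 - u ^ 2) / 4) ≠ 0) hu1']
    ring
  rw [hsq, hdiv]
  field_simp
  linear_combination (18 - 18 * u) * hαu
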